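/- Let ṽ = (a, q̃, w̃) be a triple of bounded continuous real functions on ℝ with a and w̃ strictly positive, and let λ ∈ ℝ. If for some solution θ₀ of the Prüfer equation associated with ṽ the limit lim_{x→+∞} (θ₀(x) − θ₀(0))/x exists, then for every solution θ of the same Prüfer equation the limit lim_{x→+∞} (θ(x) − θ(0))/x exists and equals that of θ₀; in other words, existence and the value of the limit are independent of the initial angle. -/

import Mathlib

open Filter Topology MeasureTheory Set

noncomputable section

/-- A continuous function `f : ℝ → E` is Bohr almost periodic if every sequence of reals
has a subsequence along which the translates converge uniformly on `ℝ`. -/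
def BohrAP {E : Type*} [NormedAddCommGroup E] (f : ℝ → E) : Prop :=
  Continuous f ∧ ∀ t : ℕ → ℝ, ∃ (s : ℕ → ℕ) (g : ℝ → E),
    StrictMono s ∧ TendstoUniformly (fun n x => f (x + t (s n))) g atTop

/-- The hull of `f`: uniform limits of sequences of translates of `f`. -/
def Hull {E : Type*} [NormedAddCommGroup E] (f : ℝ → E) : Set (ℝ → E) :=
  {g | ∃ t : ℕ → ℝ, TendstoUniformly (fun n x => f (x + t n)) g atTop}

/-- `AP₊(ℝ,ℝ)`: Bohr almost periodic functions all of whose hull elements are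
strictly positive at every point. -/
def APplus (f : ℝ → ℝ) : Prop :=
  BohrAP f ∧ ∀ g ∈ Hull f, ∀ x : ℝ, 0 < g x

/-- The set of Fourier exponents of `f`: those `l` for which the Fourier coefficient
`lim_{T→∞} (1/T) ∫₀^T f(x) e^{-i l x} dx` is nonzero (encoded as: the averages do not
tend to `0`; for Bohr almost periodic `f` the limit always exists). -/
def freqSet (f : ℝ → ℝ) : Set ℝ :=
  {l : ℝ | ¬ Tendsto
      (fun T : ℝ => (T : ℂ)⁻¹ *
        ∫ x in (0:ℝ)..T, (f x : ℂ) * Complex.exp (-(Complex.I * (l : ℂ) * (x : ℂ))))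
      atTop (𝓝 0)}

/-- The frequency module of `f`: the smallest additive subgroup of `ℝ` containing the
Fourier exponents of `f`. -/
def freqModule (f : ℝ → ℝ) : AddSubgroup ℝ := AddSubgroup.closure (freqSet f)

/-- `θ` solves the Prüfer equation `θ' = a cos²θ + (λ w - q) sin²θ`. -/
def IsPruefer (a q w : ℝ → ℝ) (lam : ℝ) (θ : ℝ → ℝ) : Prop :=
  ∀ x : ℝ, HasDerivAt θ
    (a x * Real.cos (θ x) ^ 2 + (lam * w x - q x) * Real.sin (θ x) ^ 2) x

/-- `φ` is a (real) solution of the Sturm–Liouville equation `-(pφ')' + qφ = λ w φ`: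
`φ` is `C¹`, `pφ'` is `C¹`, and the equation holds everywhere. -/
def IsSLSolution (p q w : ℝ → ℝ) (lam : ℝ) (φ : ℝ → ℝ) : Prop :=
  ContDiff ℝ 1 φ ∧ ContDiff ℝ 1 (fun x => p x * deriv φ x) ∧
    ∀ x : ℝ, -(deriv (fun y => p y * deriv φ y) x) + q x * φ x = lam * w x * φ x

lemma cossq_lip (y z : ℝ) : |Real.cos y ^ 2 - Real.cos z ^ 2| ≤ |y - z| := by
  have h2 := Real.cos_sub_cos (2*y) (2*z)
  rw [show (2*y+2*z)/2 = y + z by ring, show (2*y-2*z)/2 = y - z by ring] at h2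
  have : Real.cos y ^ 2 - Real.cos z ^ 2 = -(Real.sin (y+z) * Real.sin (y-z)) := by
    rw [Real.cos_sq, Real.cos_sq]
    have : Real.cos (2*y) - Real.cos (2*z) = -2 * Real.sin (y+z) * Real.sin (y-z) := h2
    linarith
  rw [this, abs_neg, abs_mul]
  calc |Real.sin (y+z)| * |Real.sin (y-z)| ≤ 1 * |y - z| := by
        apply mul_le_mul (Real.abs_sin_le_one _) (Real.abs_sin_le_abs) (abs_nonneg _) zero_le_one
    _ = |y - z| := one_mul _

lemma sinsq_lip (y z : ℝ) : |Real.sin y ^ 2 - Real.sin z ^ 2| ≤ |y - z| := by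
  have h : Real.sin y ^ 2 - Real.sin z ^ 2 = -(Real.cos y ^ 2 - Real.cos z ^ 2) := by
    rw [Real.sin_sq, Real.sin_sq]; ring
  rw [h, abs_neg]; exact cossq_lip y z

/-- Comparison: two solutions of the same scalar ODE with Lipschitz RHS preserve order. -/
lemma ode_comparison {v : ℝ → ℝ → ℝ} {K : NNReal} (hv : ∀ t, LipschitzWith K (v t))
    {f g : ℝ → ℝ} (hf : ∀ x, HasDerivAt f (v x (f x)) x)
    (hg : ∀ x, HasDerivAt g (v x (g x)) x) (h0 : f 0 ≤ g 0) :
    ∀ x, 0 ≤ x → f x ≤ g x := by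
  have hfc : Continuous f := continuous_iff_continuousAt.mpr fun x => (hf x).continuousAt
  have hgc : Continuous g := continuous_iff_continuousAt.mpr fun x => (hg x).continuousAt
  intro x hx
  by_contra hcon
  push_neg at hcon
  set S : Set ℝ := Icc 0 x ∩ {t | f t ≤ g t} with hS
  have h0S : (0:ℝ) ∈ S := ⟨⟨le_refl _, hx⟩, h0⟩
  have hSbdd : BddAbove S := ⟨x, fun t ht => ht.1.2⟩
  have hSclosed : IsClosed S := isClosed_Icc.inter (isClosed_le hfc hgc)
  set c := sSup S with hcdef
  have hcS : c ∈ S := hSclosed.csSup_mem ⟨0, h0S⟩ hSbdd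
  have hc0 : 0 ≤ c := hcS.1.1
  have hcx : c ≤ x := hcS.1.2
  have hcne : c ≠ x := by
    intro he
    have : f x ≤ g x := he ▸ hcS.2
    exact absurd this (not_le.mpr hcon)
  have hclt : c < x := lt_of_le_of_ne hcx hcne
  have hle : f c ≤ g c := hcS.2
  have hfgc : f c = g c := by
    rcases eq_or_lt_of_le hle with he | hlt
    · exact he
    · exfalso
      have hev : ∀ᶠ t in 𝓝 c, f t < g t := hfc.continuousAt.eventually_lt hgc.continuousAt hlt
      rcases Metric.eventually_nhds_iff.mp hev with ⟨δ, hδ, hδ'⟩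
      set t := min x (c + δ/2) with htdef
      have htc : c < t := lt_min hclt (by linarith)
      have htS : t ∈ S := by
        refine ⟨⟨le_trans hc0 htc.le, min_le_left _ _⟩, le_of_lt (hδ' ?_)⟩
        rw [Real.dist_eq, abs_of_pos (by linarith)]
        have : t ≤ c + δ/2 := min_le_right _ _
        linarith
      exact absurd (le_csSup hSbdd htS) (not_le.mpr htc)
  have := ODE_solution_unique_of_mem_Icc_right (v := v) (s := fun _ => (univ : Set ℝ))
      (fun t _ => (hv t).lipschitzOnWith) (hfc.continuousOn : ContinuousOn f (Icc c x))
      (fun t _ => (hf t).hasDerivWithinAt) (fun _ _ => mem_univ _)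
      (hgc.continuousOn) (fun t _ => (hg t).hasDerivWithinAt) (fun _ _ => mem_univ _) hfgc
  have hfx : f x = g x := this ⟨hcx, le_refl x⟩
  exact absurd hfx.le (not_le.mpr hcon)

lemma cossq_shift (y : ℝ) (k : ℤ) : Real.cos (y + k * Real.pi) ^ 2 = Real.cos y ^ 2 := by
  rw [Real.cos_sq, Real.cos_sq,
    show 2*(y + (k:ℝ)*Real.pi) = 2*y + (k:ℝ)*(2*Real.pi) by ring,
    Real.cos_add_int_mul_two_pi]

lemma sinsq_shift (y : ℝ) (k : ℤ) : Real.sin (y + k * Real.pi) ^ 2 = Real.sin y ^ 2 := by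
  rw [Real.sin_sq, Real.sin_sq, cossq_shift]


/-- existence and value of the rotation limit do not depend on the
initial angle. -/
theorem pruefer_limit_independent (a q w : ℝ → ℝ)
    (ha : Continuous a) (hq : Continuous q) (hw : Continuous w)
    (hab : ∃ C : ℝ, ∀ x : ℝ, |a x| ≤ C) (hqb : ∃ C : ℝ, ∀ x : ℝ, |q x| ≤ C)
    (hwb : ∃ C : ℝ, ∀ x : ℝ, |w x| ≤ C)
    (hapos : ∀ x : ℝ, 0 < a x) (hwpos : ∀ x : ℝ, 0 < w x)
    (lam L : ℝ) (θ₀ : ℝ → ℝ) (h₀ : IsPruefer a q w lam θ₀)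
    (hlim : Tendsto (fun x => (θ₀ x - θ₀ 0) / x) atTop (𝓝 L)) :
    ∀ θ : ℝ → ℝ, IsPruefer a q w lam θ →
      Tendsto (fun x => (θ x - θ 0) / x) atTop (𝓝 L) := by
  intro θ hθ
  obtain ⟨Ca, hCa⟩ := hab
  obtain ⟨Cq, hCq⟩ := hqb
  obtain ⟨Cw, hCw⟩ := hwb
  set v : ℝ → ℝ → ℝ := fun x y => a x * Real.cos y ^ 2 + (lam * w x - q x) * Real.sin y ^ 2
    with hvdef
  have hK : ∀ x, LipschitzWith (Ca + (|lam| * Cw + Cq)).toNNReal (v x) := by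
    intro x
    apply LipschitzWith.of_dist_le_mul
    intro y z
    rw [Real.dist_eq, Real.dist_eq]
    have h1 : v x y - v x z = a x * (Real.cos y ^ 2 - Real.cos z ^ 2)
        + (lam * w x - q x) * (Real.sin y ^ 2 - Real.sin z ^ 2) := by
      simp only [hvdef]; ring
    have h2 : |v x y - v x z| ≤ |a x| * |y - z| + |lam * w x - q x| * |y - z| := by
      rw [h1]
      refine (abs_add_le _ _).trans ?_
      rw [abs_mul, abs_mul]
      exact add_le_add (mul_le_mul_of_nonneg_left (cossq_lip y z) (abs_nonneg _))
        (mul_le_mul_of_nonneg_left (sinsq_lip y z) (abs_nonneg _))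
    have h3 : |lam * w x - q x| ≤ |lam| * Cw + Cq := by
      refine (abs_sub _ _).trans (add_le_add ?_ (hCq x))
      rw [abs_mul]
      exact mul_le_mul_of_nonneg_left (hCw x) (abs_nonneg _)
    have h4 : (((Ca + (|lam| * Cw + Cq)).toNNReal : NNReal) : ℝ)
        = max (Ca + (|lam| * Cw + Cq)) 0 := Real.coe_toNNReal' _
    rw [h4]
    calc |v x y - v x z| ≤ |a x| * |y - z| + |lam * w x - q x| * |y - z| := h2
      _ = (|a x| + |lam * w x - q x|) * |y - z| := by ring
      _ ≤ (Ca + (|lam| * Cw + Cq)) * |y - z| :=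
          mul_le_mul_of_nonneg_right (add_le_add (hCa x) h3) (abs_nonneg _)
      _ ≤ max (Ca + (|lam| * Cw + Cq)) 0 * |y - z| :=
          mul_le_mul_of_nonneg_right (le_max_left _ _) (abs_nonneg _)
  have hshift : ∀ (k : ℤ), ∀ x : ℝ, HasDerivAt (fun x => θ₀ x + (k:ℝ) * Real.pi)
      (v x (θ₀ x + (k:ℝ) * Real.pi)) x := by
    intro k x
    have h1 := (h₀ x).add_const ((k:ℝ) * Real.pi)
    have h2 : v x (θ₀ x + (k:ℝ) * Real.pi)
        = a x * Real.cos (θ₀ x) ^ 2 + (lam * w x - q x) * Real.sin (θ₀ x) ^ 2 := by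
      simp only [hvdef, cossq_shift, sinsq_shift]
    rw [h2]
    exact h1
  have hπ := Real.pi_pos
  set k : ℤ := ⌊(θ 0 - θ₀ 0) / Real.pi⌋ with hkdef
  have hk1 : θ₀ 0 + (k:ℝ) * Real.pi ≤ θ 0 := by
    have h := Int.floor_le ((θ 0 - θ₀ 0) / Real.pi)
    rw [le_div_iff₀ hπ] at h
    linarith
  have hk2 : θ 0 ≤ θ₀ 0 + ((k+1 : ℤ):ℝ) * Real.pi := by
    have h := Int.lt_floor_add_one ((θ 0 - θ₀ 0) / Real.pi)
    rw [div_lt_iff₀ hπ] at h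
    push_cast
    push_cast at h
    linarith
  have hlow : ∀ x, 0 ≤ x → θ₀ x + (k:ℝ) * Real.pi ≤ θ x :=
    ode_comparison hK (hshift k) hθ hk1
  have hhigh : ∀ x, 0 ≤ x → θ x ≤ θ₀ x + ((k+1 : ℤ):ℝ) * Real.pi :=
    ode_comparison hK hθ (hshift (k+1)) hk2
  have htail : Tendsto (fun x => ((θ x - θ₀ x) - (θ 0 - θ₀ 0)) / x) atTop (𝓝 0) := by
    have hbound : ∀ᶠ x in atTop, ‖((θ x - θ₀ x) - (θ 0 - θ₀ 0)) / x‖ ≤ Real.pi / x := by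
      filter_upwards [eventually_gt_atTop (0:ℝ)] with x hx
      have hA1 := hlow x hx.le
      have hA2 := hhigh x hx.le
      have hB1 := hk1
      have hB2 := hk2
      have hcast : ((k+1 : ℤ):ℝ) = (k:ℝ) + 1 := by push_cast; ring
      rw [hcast] at hA2 hB2
      have hD : |(θ x - θ₀ x) - (θ 0 - θ₀ 0)| ≤ Real.pi := by
        rw [abs_le]; constructor <;> nlinarith
      rw [Real.norm_eq_abs, abs_div, abs_of_pos hx]
      exact div_le_div_of_nonneg_right hD hx.le
    exact squeeze_zero_norm' hbound (tendsto_const_nhds.div_atTop tendsto_id)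
  have key : (fun x => (θ x - θ 0) / x)
      = fun x => (θ₀ x - θ₀ 0) / x + ((θ x - θ₀ x) - (θ 0 - θ₀ 0)) / x := by
    funext x
    rw [← add_div]
    ring_nf
  rw [key]
  have := hlim.add htail
  simpa using this
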